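/- Let p be an odd prime and n, k positive integers such that n/gcd(n,k) is odd and p^n ≡ 1 (mod 4), and set d = (p^n−1)/2 + p^k + 1. Then the power function f(x)=x^d on F_{p^n} satisfies _1Δ_f ≤ 3: for every a ∈ F_{p^n} with a ≠ 0 and every b ∈ F_{p^n}, the equation (x+a)^d − x^d = b has at most 3 solutions x ∈ F_{p^n}. -/

import Mathlib

section Aux

variable {F : Type*} [Field F]

/-- If `w` is fixed by `x ↦ x^(p^a)`, it is fixed by `x ↦ x^(p^(a*q))`. -/
lemma pow_pow_mul_fix (p : ℕ) (w : F) (a : ℕ) (h : w ^ p ^ a = w) (q : ℕ) :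
    w ^ p ^ (a * q) = w := by
  induction q with
  | zero => simp
  | succ q ih => rw [Nat.mul_succ, pow_add, pow_mul, ih, h]

/-- If `w` is fixed by `x ↦ x^(p^a)` and `x ↦ x^(p^b)`, then by `x ↦ x^(p^gcd a b)`. -/
lemma pow_pow_gcd_fix (p : ℕ) (a b : ℕ) (w : F) (ha : w ^ p ^ a = w) (hb : w ^ p ^ b = w) :
    w ^ p ^ (Nat.gcd a b) = w := by
  induction a, b using Nat.gcd.induction generalizing w with
  | H0 b => simpa using hb
  | H1 a b hpos ih =>
    rw [Nat.gcd_rec]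
    refine ih w ?_ ha
    have hb' : b = a * (b / a) + b % a := (Nat.div_add_mod b a).symm
    calc w ^ p ^ (b % a) = (w ^ p ^ (a * (b / a))) ^ p ^ (b % a) := by
          rw [pow_pow_mul_fix p w a ha]
      _ = w ^ p ^ b := by rw [← pow_mul, ← pow_add, ← hb']
      _ = w := hb

lemma gcd_two_mul_dvd (n k : ℕ) (hn0 : 0 < n) (hquot : Odd (n / Nat.gcd n k)) :
    Nat.gcd (2 * k) n ∣ k := by
  have hgk : Nat.gcd n k ∣ k := Nat.gcd_dvd_right n k
  have hgn : Nat.gcd n k ∣ n := Nat.gcd_dvd_left n k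
  have hg0 : 0 < Nat.gcd n k := Nat.gcd_pos_of_pos_left _ hn0
  have h1 : Nat.gcd (2 * k) n ∣ 2 * Nat.gcd n k := by
    have h2n : n ∣ 2 * n := ⟨2, by ring⟩
    have := Nat.dvd_gcd (Nat.gcd_dvd_left (2 * k) n) ((Nat.gcd_dvd_right (2 * k) n).trans h2n)
    rwa [Nat.gcd_mul_left, Nat.gcd_comm k n] at this
  have h3 : Nat.gcd (2 * Nat.gcd n k) n = Nat.gcd n k := by
    have hn' : Nat.gcd n k * (n / Nat.gcd n k) = n := Nat.mul_div_cancel' hgn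
    calc Nat.gcd (2 * Nat.gcd n k) n
        = Nat.gcd (Nat.gcd n k * 2) (Nat.gcd n k * (n / Nat.gcd n k)) := by
          rw [hn', Nat.mul_comm]
      _ = Nat.gcd n k * Nat.gcd 2 (n / Nat.gcd n k) := Nat.gcd_mul_left _ _ _
      _ = Nat.gcd n k := by
          rw [Nat.coprime_two_left.mpr hquot]
          exact Nat.mul_one _
  have h2 : Nat.gcd (2 * k) n ∣ Nat.gcd n k := by
    rw [← h3]
    exact Nat.dvd_gcd h1 (Nat.gcd_dvd_right (2 * k) n)
  exact h2.trans hgk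

end Aux

section Field2

variable {F : Type*} [Field F] [Fintype F]

lemma two_ne_zero_char (p : ℕ) [CharP F p] (hp : p.Prime) (hp2 : p ≠ 2) : (2 : F) ≠ 0 := by
  intro h
  have : (p : ℕ) ∣ 2 := by
    have := (CharP.cast_eq_zero_iff F p 2).mp (by exact_mod_cast h)
    exact this
  exact hp2 ((Nat.prime_dvd_prime_iff_eq hp Nat.prime_two).mp this)

/-- Kernel lemma: under the gcd hypothesis, `w^(p^k) = -w` forces `w = 0`. -/
lemma kernel_lemma (p n k : ℕ) [CharP F p] (hp : p.Prime) (hp2 : p ≠ 2)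
    (hcard : Fintype.card F = p ^ n) (hgcd : Nat.gcd (2 * k) n ∣ k)
    (w : F) (hw : w ^ p ^ k = -w) : w = 0 := by
  have hoddp : Odd p := hp.odd_of_ne_two hp2
  have hfix_n : w ^ p ^ n = w := by rw [← hcard]; exact FiniteField.pow_card w
  have hfix_2k : w ^ p ^ (2 * k) = w := by
    have h2 : p ^ (2 * k) = p ^ k * p ^ k := by rw [two_mul, pow_add]
    rw [h2, pow_mul, hw, (hoddp.pow).neg_pow, hw, neg_neg]
  have hfix_g : w ^ p ^ (Nat.gcd (2 * k) n) = w := pow_pow_gcd_fix p _ _ w hfix_2k hfix_n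
  have hfix_k : w ^ p ^ k = w := by
    obtain ⟨m, hm⟩ := hgcd
    rw [hm]
    exact pow_pow_mul_fix p w _ hfix_g m
  have h2w : (2 : F) * w = 0 := by
    have := hfix_k.symm.trans hw
    linear_combination this
  rcases mul_eq_zero.mp h2w with h | h
  · exact absurd h (two_ne_zero_char p hp hp2)
  · exact h

/-- Pair lemma: nonzero `s`-th powers (with `s = p^k+1`) determine the base up to sign. -/
lemma sth_pair (p n k : ℕ) [CharP F p] (hp : p.Prime) (hp2 : p ≠ 2)
    (hcard : Fintype.card F = p ^ n) (hgcd : Nat.gcd (2 * k) n ∣ k)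
    (y z : F) (hy : y ≠ 0) (hz : z ≠ 0) (h : y ^ (p ^ k + 1) = z ^ (p ^ k + 1)) :
    y = z ∨ y = -z := by
  have hpk1 : 1 ≤ p ^ k := Nat.one_le_pow _ _ hp.pos
  set r : F := y * z⁻¹ with hr
  have hrne : r ≠ 0 := mul_ne_zero hy (inv_ne_zero hz)
  have hr1 : r ^ (p ^ k + 1) = 1 := by
    rw [hr, mul_pow, h, inv_pow, mul_inv_cancel₀ (pow_ne_zero _ hz)]
  have hfix_n : r ^ p ^ n = r := by rw [← hcard]; exact FiniteField.pow_card r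
  have hfix_2k : r ^ p ^ (2 * k) = r := by
    have hid : p ^ (2 * k) = 1 + (p ^ k + 1) * (p ^ k - 1) := by
      have : p ^ (2 * k) = p ^ k * p ^ k := by rw [two_mul, pow_add]
      rw [this]
      obtain ⟨j, hj⟩ : ∃ j, p ^ k = j + 1 := ⟨p ^ k - 1, by omega⟩
      rw [hj]
      simp [Nat.add_sub_cancel]
      ring
    rw [hid, pow_add, pow_one, pow_mul, hr1, one_pow, mul_one]
  have hfix_g : r ^ p ^ (Nat.gcd (2 * k) n) = r := pow_pow_gcd_fix p _ _ r hfix_2k hfix_n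
  have hfix_k : r ^ p ^ k = r := by
    obtain ⟨m, hm⟩ := hgcd
    rw [hm]
    exact pow_pow_mul_fix p r _ hfix_g m
  have hrk1 : r ^ (p ^ k - 1) = 1 := by
    have h1 : r ^ (p ^ k - 1) * r = r := by
      rw [← pow_succ]
      have : p ^ k - 1 + 1 = p ^ k := by omega
      rw [this, hfix_k]
    have := mul_right_cancel₀ hrne (h1.trans (one_mul r).symm)
    exact this
  have hr2 : r ^ 2 = 1 := by
    have hsplit : p ^ k + 1 = (p ^ k - 1) + 2 := by omega
    rw [hsplit, pow_add, hrk1, one_mul] at hr1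
    exact hr1
  have : r * r = 1 := by rw [← pow_two]; exact hr2
  rcases mul_self_eq_one_iff.mp this with h1 | h1
  · left
    have : y * z⁻¹ * z = 1 * z := by rw [← hr, h1]
    rwa [inv_mul_cancel_right₀ hz, one_mul] at this
  · right
    have : y * z⁻¹ * z = (-1) * z := by rw [← hr, h1]
    rwa [inv_mul_cancel_right₀ hz, neg_one_mul] at this

end Field2

lemma subsingleton_ncard_le_one {α : Type*} (s : Set α) (h : s.Subsingleton) : s.ncard ≤ 1 := by
  rcases s.eq_empty_or_nonempty with rfl | ⟨x, hx⟩
  · simp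
  · have hs : s ⊆ {x} := fun y hy => by simp [h hy hx]
    calc s.ncard ≤ ({x} : Set α).ncard := Set.ncard_le_ncard hs (Set.finite_singleton x)
      _ = 1 := Set.ncard_singleton x

/-- Theorem 3.6 (Theorem `thme`), case `p^n ≡ 1 (mod 4)`, `c = 1`: for
`d = (p^n-1)/2 + p^k + 1` with `n/gcd(n,k)` odd, one has `₁Δ_f ≤ 3`. -/
theorem stmt_16 (p n k : ℕ) (hp : p.Prime) (hodd : Odd p)
    (hn0 : 0 < n) (hk0 : 0 < k) (hquot : Odd (n / Nat.gcd n k))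
    (hmod : p ^ n % 4 = 1) (d : ℕ) (hd : d = (p ^ n - 1) / 2 + p ^ k + 1)
    (F : Type*) [Field F] [Fintype F] (hcard : Fintype.card F = p ^ n)
    (a b : F) (ha : a ≠ 0) :
    {x : F | (x + a) ^ d - x ^ d = b}.ncard ≤ 3 := by
  classical
  have hp2 : p ≠ 2 := by rintro rfl; have := Nat.odd_iff.mp hodd; omega
  haveI : Fact p.Prime := ⟨hp⟩
  haveI hcharp : CharP F p := by
    have h0 : ((p : F)) ^ n = 0 := by
      have h := FiniteField.cast_card_eq_zero F
      rw [hcard] at h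
      exact_mod_cast h
    have hp0 : (p : F) = 0 := (pow_eq_zero_iff (by omega : n ≠ 0)).mp h0
    have hdvd : ringChar F ∣ p := ringChar.dvd hp0
    have hrc : ringChar F = p :=
      ((hp.eq_one_or_self_of_dvd _ hdvd).resolve_left CharP.ringChar_ne_one)
    exact ringChar.of_eq hrc
  have h2F : (2 : F) ≠ 0 := two_ne_zero_char p hp hp2
  have hgcd : Nat.gcd (2 * k) n ∣ k := gcd_two_mul_dvd n k hn0 hquot
  -- numerics
  have hq3 : 3 ≤ p ^ n := by
    have h1 : p ≤ p ^ n := Nat.le_self_pow (by omega) p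
    have h2 : 3 ≤ p := by have := hp.two_le; omega
    omega
  set t := (p ^ n - 1) / 2 with htdef
  set s := p ^ k + 1 with hsdef
  have hq5 : 5 ≤ p ^ n := by omega
  have h2t : 2 * t = p ^ n - 1 := by omega
  have htpos : 0 < t := by omega
  have hteven : Even t := by rw [Nat.even_iff]; omega
  have hoddpk : Odd (p ^ k) := hodd.pow
  have hseven : Even s := by rw [hsdef]; exact hoddpk.add_one
  have hspos : 0 < s := by have := Nat.one_le_pow k p hp.pos; omega
  have hdts : d = t + s := by omega
  have hdeven : Even d := by rw [hdts]; exact hteven.add hseven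
  have hdpos : 0 < d := by omega
  -- field basics
  have hpow_card : ∀ x : F, x ≠ 0 → x ^ (p ^ n - 1) = 1 := by
    intro x hx
    have h := FiniteField.pow_card_sub_one_eq_one x hx
    rwa [hcard] at h
  have hchi_sq : ∀ x : F, x ≠ 0 → x ^ t * x ^ t = 1 := by
    intro x hx
    rw [← pow_add]
    have h : t + t = p ^ n - 1 := by omega
    rw [h]; exact hpow_card x hx
  have hchi_pm : ∀ x : F, x ≠ 0 → x ^ t = 1 ∨ x ^ t = -1 := fun x hx =>
    mul_self_eq_one_iff.mp (hchi_sq x hx)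
  have hneg_t : ∀ x : F, (-x) ^ t = x ^ t := fun x => hteven.neg_pow x
  have hneg_s : ∀ x : F, (-x) ^ s = x ^ s := fun x => hseven.neg_pow x
  have h2pk : (2 : F) ^ p ^ k = 2 := by
    have h := add_pow_char_pow (1 : F) 1 p k
    norm_num at h
    exact h
  have h2s4 : (2 : F) ^ s = 4 := by
    rw [hsdef, pow_succ, h2pk]; norm_num
  have hExp : ∀ x c : F, (x + c) ^ s = x ^ s + (c ^ p ^ k * x + c * x ^ p ^ k) + c ^ s := by
    intro x c
    rw [hsdef, pow_succ, pow_succ, pow_succ, add_pow_char_pow]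
    ring
  have hLa : a ^ p ^ k * a + a * a ^ p ^ k = 2 * a ^ s := by
    rw [hsdef, pow_succ]; ring
  have hLinj : ∀ x y : F,
      a ^ p ^ k * x + a * x ^ p ^ k = a ^ p ^ k * y + a * y ^ p ^ k → x = y := by
    intro x y hxy
    have hw : a ^ p ^ k * (x - y) + a * (x - y) ^ p ^ k = 0 := by
      rw [sub_pow_char_pow]
      linear_combination hxy
    have hv : ((x - y) / a) ^ p ^ k = -((x - y) / a) := by
      rw [div_pow, ← neg_div, div_eq_div_iff (pow_ne_zero _ ha) ha]
      linear_combination hw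
    have h0 : (x - y) / a = 0 := kernel_lemma p n k hp hp2 hcard hgcd _ hv
    have : x - y = 0 := by
      rcases div_eq_zero_iff.mp h0 with h | h
      · exact h
      · exact absurd h ha
    exact sub_eq_zero.mp this
  have hhalf : ∀ x : F, (2 * x + a) ^ s
      = 4 * x ^ s + 2 * (a ^ p ^ k * x + a * x ^ p ^ k) + a ^ s := by
    intro x
    have h := hExp (2 * x) a
    rw [mul_pow, mul_pow, h2s4, h2pk] at h
    rw [h]
    ring
  -- sets
  set S : Set F := {x : F | (x + a) ^ d - x ^ d = b} with hSdef
  set A : Set F := {x : F | x ∈ S ∧ x ≠ 0 ∧ x + a ≠ 0 ∧ (x + a) ^ t = x ^ t} with hAdef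
  set B : Set F := {x : F | x ∈ S ∧ (x + a) ^ t = 1 ∧ x ^ t = -1} with hBdef
  set C : Set F := {x : F | x ∈ S ∧ (x + a) ^ t = -1 ∧ x ^ t = 1} with hCdef
  set D : Set F := S ∩ {0, -a} with hDdef
  have hSeq : ∀ x ∈ S, (x + a) ^ t * (x + a) ^ s - x ^ t * x ^ s = b := by
    intro x hx
    have h : (x + a) ^ d - x ^ d = b := hx
    rwa [hdts, pow_add (x + a) t s, pow_add x t s] at h
  -- B and C equations
  have hB_eq : ∀ x ∈ B, (2 * x + a) ^ s = 2 * b - a ^ s := by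
    intro x hx
    obtain ⟨hxS, hx1, hx2⟩ := hx
    have h1 := hSeq x hxS
    rw [hx1, hx2] at h1
    have h2 := hExp x a
    have h3 := hhalf x
    linear_combination h3 + 2 * h1 - 2 * h2
  have hC_eq : ∀ x ∈ C, (2 * x + a) ^ s = -(2 * b) - a ^ s := by
    intro x hx
    obtain ⟨hxS, hx1, hx2⟩ := hx
    have h1 := hSeq x hxS
    rw [hx1, hx2] at h1
    have h2 := hExp x a
    have h3 := hhalf x
    linear_combination h3 - 2 * h1 - 2 * h2
  have hBne : ∀ x ∈ B, x ≠ 0 ∧ x + a ≠ 0 := by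
    intro x hx
    obtain ⟨hxS, hx1, hx2⟩ := hx
    constructor
    · rintro rfl
      rw [zero_pow (show t ≠ 0 by omega)] at hx2
      exact one_ne_zero (by linear_combination hx2 : (1:F) = 0)
    · intro h
      rw [h, zero_pow (show t ≠ 0 by omega)] at hx1
      exact zero_ne_one hx1
  have hCne : ∀ x ∈ C, x ≠ 0 ∧ x + a ≠ 0 := by
    intro x hx
    obtain ⟨hxS, hx1, hx2⟩ := hx
    constructor
    · rintro rfl
      rw [zero_pow (show t ≠ 0 by omega)] at hx2
      exact zero_ne_one hx2
    · intro h
      rw [h, zero_pow (show t ≠ 0 by omega)] at hx1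
      exact one_ne_zero (by linear_combination hx1 : (1:F) = 0)
  -- a helper to cancel the factor 2
  have hcancel2 : ∀ u v : F, (2 : F) * u = 2 * v → u = v := by
    intro u v huv
    have h : (2 : F) * (u - v) = 0 := by linear_combination huv
    rcases mul_eq_zero.mp h with h | h
    · exact absurd h h2F
    · exact sub_eq_zero.mp h
  -- subsingletons
  have hBsub : B.Subsingleton := by
    intro x hx y hy
    have hxy : (2 * x + a) ^ s = (2 * y + a) ^ s := by rw [hB_eq x hx, hB_eq y hy]
    by_cases hx0 : 2 * x + a = 0
    · rw [hx0, zero_pow (show s ≠ 0 by omega)] at hxy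
      have hy0 : 2 * y + a = 0 := (pow_eq_zero_iff (show s ≠ 0 by omega)).mp hxy.symm
      exact hcancel2 x y (by linear_combination hx0 - hy0)
    · have hy0 : 2 * y + a ≠ 0 := by
        intro h
        rw [h, zero_pow (show s ≠ 0 by omega)] at hxy
        exact hx0 ((pow_eq_zero_iff (show s ≠ 0 by omega)).mp hxy)
      rw [hsdef] at hxy
      rcases sth_pair p n k hp hp2 hcard hgcd _ _ hx0 hy0 hxy with h | h
      · exact hcancel2 x y (by linear_combination h)
      · obtain ⟨hyS, hy1, hy2⟩ := hy
        obtain ⟨hxS, hx1, hx2⟩ := hx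
        have hx' : x = -(y + a) := hcancel2 x (-(y + a)) (by linear_combination h)
        have hxt : x ^ t = (y + a) ^ t := by rw [hx', hneg_t]
        rw [hx2, hy1] at hxt
        exact absurd (by linear_combination -hxt : (2:F) = 0) h2F
  have hCsub : C.Subsingleton := by
    intro x hx y hy
    have hxy : (2 * x + a) ^ s = (2 * y + a) ^ s := by rw [hC_eq x hx, hC_eq y hy]
    by_cases hx0 : 2 * x + a = 0
    · rw [hx0, zero_pow (show s ≠ 0 by omega)] at hxy
      have hy0 : 2 * y + a = 0 := (pow_eq_zero_iff (show s ≠ 0 by omega)).mp hxy.symm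
      exact hcancel2 x y (by linear_combination hx0 - hy0)
    · have hy0 : 2 * y + a ≠ 0 := by
        intro h
        rw [h, zero_pow (show s ≠ 0 by omega)] at hxy
        exact hx0 ((pow_eq_zero_iff (show s ≠ 0 by omega)).mp hxy)
      rw [hsdef] at hxy
      rcases sth_pair p n k hp hp2 hcard hgcd _ _ hx0 hy0 hxy with h | h
      · exact hcancel2 x y (by linear_combination h)
      · obtain ⟨hyS, hy1, hy2⟩ := hy
        obtain ⟨hxS, hx1, hx2⟩ := hx
        have hx' : x + a = -y := hcancel2 (x + a) (-y) (by linear_combination h)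
        have hxt : (x + a) ^ t = y ^ t := by rw [hx', hneg_t]
        rw [hx1, hy2] at hxt
        exact absurd (by linear_combination -hxt : (2:F) = 0) h2F
  have hA_eq : ∀ x ∈ A, a ^ p ^ k * x + a * x ^ p ^ k = b * x ^ t - a ^ s := by
    intro x hx
    obtain ⟨hxS, hx0, hxa0, hxt⟩ := hx
    have h1 := hSeq x hxS
    rw [hxt] at h1
    have h2 := hExp x a
    have hsq := hchi_sq x hx0
    linear_combination x ^ t * h1 - ((x + a) ^ s - x ^ s) * hsq - h2
  have hAcross : ∀ x y : F, x ∈ A → y ∈ A → x ^ t = 1 → y ^ t = -1 → False := by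
    intro x y hxA hyA hxt1 hyt1
    have hx := hA_eq x hxA
    have hy := hA_eq y hyA
    rw [hxt1] at hx
    rw [hyt1] at hy
    have hnp : (-a - x) ^ p ^ k = -(a ^ p ^ k) - x ^ p ^ k := by
      rw [show -a - x = -(a + x) by ring, hoddpk.neg_pow, add_pow_char_pow]
      ring
    have hkey : a ^ p ^ k * (-a - x) + a * (-a - x) ^ p ^ k
        = a ^ p ^ k * y + a * y ^ p ^ k := by
      rw [hnp]
      linear_combination (-1 : F) * hLa - hx - hy
    have hyx : y = -a - x := (hLinj _ _ hkey).symm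
    obtain ⟨_, _, _, hxpat⟩ := hxA
    have hyt : y ^ t = x ^ t := by
      rw [hyx, show -a - x = -(x + a) by ring, hneg_t, hxpat]
    rw [hyt1, hxt1] at hyt
    exact absurd (by linear_combination -hyt : (2:F) = 0) h2F
  have hAsub : A.Subsingleton := by
    intro x hx y hy
    rcases hchi_pm x hx.2.1 with h1 | h1 <;> rcases hchi_pm y hy.2.1 with h2 | h2
    · exact hLinj x y (by rw [hA_eq x hx, hA_eq y hy, h1, h2])
    · exact (hAcross x y hx hy h1 h2).elim
    · exact (hAcross y x hy hx h2 h1).elim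
    · exact hLinj x y (by rw [hA_eq x hx, hA_eq y hy, h1, h2])
  have hDsub : D.Subsingleton := by
    have hcontra : ¬ ((0 : F) ∈ S ∧ (-a : F) ∈ S) := by
      rintro ⟨h0, hma⟩
      have hb1 : a ^ d = b := by
        have h : ((0:F) + a) ^ d - (0:F) ^ d = b := h0
        rw [zero_add, zero_pow (show d ≠ 0 by omega), sub_zero] at h
        exact h
      have hb2 : -(a ^ d) = b := by
        have h : ((-a : F) + a) ^ d - (-a : F) ^ d = b := hma
        rw [neg_add_cancel, zero_pow (show d ≠ 0 by omega), zero_sub, hdeven.neg_pow] at h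
        exact h
      have h2ad : (2 : F) * a ^ d = 0 := by linear_combination hb1 - hb2
      rcases mul_eq_zero.mp h2ad with h | h
      · exact h2F h
      · exact ha ((pow_eq_zero_iff (show d ≠ 0 by omega)).mp h)
    intro x hx y hy
    obtain ⟨hxS, hxm⟩ := hx
    obtain ⟨hyS, hym⟩ := hy
    simp only [Set.mem_insert_iff, Set.mem_singleton_iff] at hxm hym
    rcases hxm with rfl | rfl <;> rcases hym with rfl | rfl
    · rfl
    · exact (hcontra ⟨hxS, hyS⟩).elim
    · exact (hcontra ⟨hyS, hxS⟩).elim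
    · rfl
  -- interaction
  have hquarter : ∀ x : F, x ≠ 0 → x + a ≠ 0 → (2 * x + a) ^ s ≠ a ^ s := by
    intro x hx0 hxa0 hcon
    have hx2 : 2 * x + a ≠ 0 := by
      intro h
      rw [h, zero_pow (show s ≠ 0 by omega)] at hcon
      exact pow_ne_zero s ha hcon.symm
    rw [hsdef] at hcon
    rcases sth_pair p n k hp hp2 hcard hgcd _ _ hx2 ha hcon with h | h
    · exact hx0 (hcancel2 x 0 (by linear_combination h))
    · exact hxa0 (hcancel2 (x + a) 0 (by linear_combination h))
  have hBempty : b = a ^ s → B = ∅ := by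
    intro hb
    rw [Set.eq_empty_iff_forall_notMem]
    intro x hxB
    have hne := hBne x hxB
    apply hquarter x hne.1 hne.2
    rw [hB_eq x hxB, hb]
    ring
  have hCempty : b = -(a ^ s) → C = ∅ := by
    intro hb
    rw [Set.eq_empty_iff_forall_notMem]
    intro x hxC
    have hne := hCne x hxC
    apply hquarter x hne.1 hne.2
    rw [hC_eq x hxC, hb]
    ring
  have hInter : D.Nonempty → B = ∅ ∨ C = ∅ := by
    rintro ⟨x0, hx0S, hx0m⟩
    simp only [Set.mem_insert_iff, Set.mem_singleton_iff] at hx0m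
    rcases hx0m with rfl | rfl
    · have h := hSeq 0 hx0S
      rw [zero_add, zero_pow (show t ≠ 0 by omega), zero_mul, sub_zero] at h
      rcases hchi_pm a ha with h1 | h1
      · left
        rw [h1, one_mul] at h
        exact hBempty h.symm
      · right
        rw [h1] at h
        exact hCempty (by linear_combination -h)
    · have h := hSeq (-a) hx0S
      rw [neg_add_cancel, zero_pow (show t ≠ 0 by omega), zero_mul, zero_sub,
        hneg_t, hneg_s] at h
      rcases hchi_pm a ha with h1 | h1
      · right
        rw [h1, one_mul] at h
        exact hCempty (by linear_combination -h)
      · left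
        rw [h1] at h
        exact hBempty (by linear_combination -h)
  -- cover
  have hcover : S ⊆ A ∪ B ∪ C ∪ D := by
    intro x hx
    by_cases hx0 : x = 0
    · exact Or.inr ⟨hx, by simp [hx0]⟩
    by_cases hxa : x = -a
    · exact Or.inr ⟨hx, by simp [hxa]⟩
    have hxa0 : x + a ≠ 0 := fun h => hxa (by linear_combination h)
    rcases hchi_pm x hx0 with h1 | h1 <;> rcases hchi_pm (x + a) hxa0 with h2 | h2
    · exact Or.inl (Or.inl (Or.inl ⟨hx, hx0, hxa0, h2.trans h1.symm⟩))
    · exact Or.inl (Or.inr ⟨hx, h2, h1⟩)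
    · exact Or.inl (Or.inl (Or.inr ⟨hx, h2, h1⟩))
    · exact Or.inl (Or.inl (Or.inl ⟨hx, hx0, hxa0, h2.trans h1.symm⟩))
  -- counting
  have hA1 : A.ncard ≤ 1 := subsingleton_ncard_le_one A hAsub
  have hB1 : B.ncard ≤ 1 := subsingleton_ncard_le_one B hBsub
  have hC1 : C.ncard ≤ 1 := subsingleton_ncard_le_one C hCsub
  have hD1 : D.ncard ≤ 1 := subsingleton_ncard_le_one D hDsub
  rcases D.eq_empty_or_nonempty with hD | hD
  · have hsub : S ⊆ A ∪ B ∪ C := by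
      intro x hx
      rcases hcover hx with h | h
      · exact h
      · rw [hD] at h; exact absurd h (Set.notMem_empty x)
    calc S.ncard ≤ (A ∪ B ∪ C).ncard := Set.ncard_le_ncard hsub (Set.toFinite _)
      _ ≤ (A ∪ B).ncard + C.ncard := Set.ncard_union_le _ _
      _ ≤ A.ncard + B.ncard + C.ncard := Nat.add_le_add_right (Set.ncard_union_le _ _) _
      _ ≤ 3 := by omega
  · rcases hInter hD with hB0 | hC0
    · have hsub : S ⊆ A ∪ C ∪ D := by
        intro x hx
        rcases hcover hx with (((h | h) | h) | h)
        · exact Or.inl (Or.inl h)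
        · rw [hB0] at h; exact absurd h (Set.notMem_empty x)
        · exact Or.inl (Or.inr h)
        · exact Or.inr h
      calc S.ncard ≤ (A ∪ C ∪ D).ncard := Set.ncard_le_ncard hsub (Set.toFinite _)
        _ ≤ (A ∪ C).ncard + D.ncard := Set.ncard_union_le _ _
        _ ≤ A.ncard + C.ncard + D.ncard := Nat.add_le_add_right (Set.ncard_union_le _ _) _
        _ ≤ 3 := by omega
    · have hsub : S ⊆ A ∪ B ∪ D := by
        intro x hx
        rcases hcover hx with (((h | h) | h) | h)
        · exact Or.inl (Or.inl h)
        · exact Or.inl (Or.inr h)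
        · rw [hC0] at h; exact absurd h (Set.notMem_empty x)
        · exact Or.inr h
      calc S.ncard ≤ (A ∪ B ∪ D).ncard := Set.ncard_le_ncard hsub (Set.toFinite _)
        _ ≤ (A ∪ B).ncard + D.ncard := Set.ncard_union_le _ _
        _ ≤ A.ncard + B.ncard + D.ncard := Nat.add_le_add_right (Set.ncard_union_le _ _) _
        _ ≤ 3 := by omega
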